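/- Let p ≥ 5 be prime and a ∈ (0,1) ∩ ℚ with v_p(a) = 0, and let a' be defined by a + i = p·a' where i ∈ {1,…,p−1} is the unique index with a + i ≡ 0 (mod p). Then for every r ≥ 1, (a)_{p^r}/(a')_{p^{r−1}} ≡ (1−a)_{p^r}/(1−a')_{p^{r−1}} (mod p^{p^{r−1}+2r}). -/

import Mathlib

open Finset

section Aux

variable {p : ℕ} [hpf : Fact p.Prime]

lemma asc_eval_prod {R : Type*} [CommSemiring R] (n : ℕ) (x : R) :
    (ascPochhammer R n).eval x = ∏ k ∈ Finset.range n, (x + k) := by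
  induction n with
  | zero => simp
  | succ n ih => rw [ascPochhammer_succ_eval, ih, Finset.prod_range_succ]

lemma prod_reflect_neg (x : ℚ_[p]) (n : ℕ) (hn : 1 ≤ n) :
    ∏ k ∈ range n, (1 - x + k) = (-1 : ℚ_[p]) ^ n * ∏ k ∈ range n, (x + k - n) := by
  calc ∏ k ∈ range n, (1 - x + k)
      = ∏ k ∈ range n, (1 - x + ((n - 1 - k : ℕ) : ℚ_[p])) :=
        (Finset.prod_range_reflect (fun k => (1 - x + k : ℚ_[p])) n).symm
    _ = ∏ k ∈ range n, (-1 : ℚ_[p]) * (x + k - n) := by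
        refine Finset.prod_congr rfl fun k hk => ?_
        have hk' : k < n := Finset.mem_range.mp hk
        have h1 : ((n - 1 - k : ℕ) : ℚ_[p]) = (n : ℚ_[p]) - 1 - k := by
          have hkn : k ≤ n - 1 := Nat.le_sub_one_of_lt hk'
          push_cast [Nat.cast_sub hkn, Nat.cast_sub hn]
          ring
        rw [h1]; ring
    _ = (-1 : ℚ_[p]) ^ n * ∏ k ∈ range n, (x + k - n) := by
        rw [Finset.prod_mul_distrib, Finset.prod_const, Finset.card_range]

lemma norm_S_le (s : Finset ℕ) (x : ℕ → ℚ_[p]) (hx : ∀ k ∈ s, ‖x k‖ ≤ 1) :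
    ‖∑ k ∈ s, ∏ l ∈ s.erase k, x l‖ ≤ 1 := by
  refine IsUltrametricDist.norm_sum_le_of_forall_le_of_nonneg (s := s)
    (f := fun k => ∏ l ∈ s.erase k, x l) zero_le_one fun k hk => ?_
  rw [norm_prod]
  exact Finset.prod_le_one (fun l _ => norm_nonneg _)
    (fun l hl => hx l (Finset.erase_subset _ _ hl))

lemma prod_sub_bound (s : Finset ℕ) (x : ℕ → ℚ_[p]) (N : ℚ_[p]) (hN : ‖N‖ ≤ 1)
    (hx : ∀ k ∈ s, ‖x k‖ ≤ 1) :
    ‖∏ k ∈ s, (x k - N) - ∏ k ∈ s, x k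
      + N * ∑ k ∈ s, ∏ l ∈ s.erase k, x l‖ ≤ ‖N‖ ^ 2 := by
  induction s using Finset.cons_induction with
  | empty => simpa using sq_nonneg ‖N‖
  | cons a s ha ih =>
    have hxa : ‖x a‖ ≤ 1 := hx a (Finset.mem_cons_self a s)
    have hxs : ∀ k ∈ s, ‖x k‖ ≤ 1 := fun k hk => hx k (Finset.mem_cons.mpr (Or.inr hk))
    have hS' : (∑ k ∈ Finset.cons a s ha, ∏ l ∈ (Finset.cons a s ha).erase k, x l)
        = (∏ l ∈ s, x l) + x a * ∑ k ∈ s, ∏ l ∈ s.erase k, x l := by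
      rw [Finset.sum_cons]
      congr 1
      · rw [Finset.erase_cons]
      · rw [Finset.mul_sum]
        refine Finset.sum_congr rfl fun k hk => ?_
        have hak : a ≠ k := fun h => ha (h ▸ hk)
        rw [Finset.erase_cons_of_ne ha hak, Finset.prod_cons]
    set P := ∏ k ∈ s, (x k - N)
    set Q := ∏ k ∈ s, x k
    set S := ∑ k ∈ s, ∏ l ∈ s.erase k, x l
    have key : (∏ k ∈ Finset.cons a s ha, (x k - N)) - (∏ k ∈ Finset.cons a s ha, x k)
        + N * ((∏ l ∈ s, x l) + x a * S)
        = x a * (P - Q + N * S) - N * (P - Q + N * S) + N ^ 2 * S := by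
      rw [Finset.prod_cons, Finset.prod_cons]
      ring
    rw [hS', key]
    have hE : ‖P - Q + N * S‖ ≤ ‖N‖ ^ 2 := ih hxs
    have hSle : ‖S‖ ≤ 1 := norm_S_le s x hxs
    have h1 : ‖x a * (P - Q + N * S)‖ ≤ ‖N‖ ^ 2 := by
      rw [norm_mul]
      calc ‖x a‖ * ‖P - Q + N * S‖ ≤ 1 * (‖N‖ ^ 2) :=
        mul_le_mul hxa hE (norm_nonneg _) zero_le_one
      _ = ‖N‖ ^ 2 := one_mul _
    have h2 : ‖N * (P - Q + N * S)‖ ≤ ‖N‖ ^ 2 := by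
      rw [norm_mul]
      calc ‖N‖ * ‖P - Q + N * S‖ ≤ 1 * (‖N‖ ^ 2) :=
        mul_le_mul hN hE (norm_nonneg _) zero_le_one
      _ = ‖N‖ ^ 2 := one_mul _
    have h3 : ‖N ^ 2 * S‖ ≤ ‖N‖ ^ 2 := by
      rw [norm_mul, norm_pow]
      calc ‖N‖ ^ 2 * ‖S‖ ≤ ‖N‖ ^ 2 * 1 :=
        mul_le_mul_of_nonneg_left hSle (by positivity)
      _ = ‖N‖ ^ 2 := mul_one _
    calc ‖x a * (P - Q + N * S) - N * (P - Q + N * S) + N ^ 2 * S‖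
        ≤ max ‖x a * (P - Q + N * S) - N * (P - Q + N * S)‖ ‖N ^ 2 * S‖ :=
          Padic.nonarchimedean _ _
      _ ≤ ‖N‖ ^ 2 := by
          refine max_le ?_ h3
          rw [sub_eq_add_neg]
          exact (Padic.nonarchimedean _ _).trans
            (max_le h1 (by rwa [norm_neg]))

end Aux

set_option maxHeartbeats 2000000 in
/-- For `p ≥ 5` prime, `a ∈ (0,1) ∩ ℚ` a `p`-adic unit, `a'` defined by
`p a' = a + i` with `i ∈ {1,…,p-1}` and `p ∣ a + i`, and `r ≥ 1`:
`(a)_{p^r}/(a')_{p^{r-1}} ≡ (1-a)_{p^r}/(1-a')_{p^{r-1}} (mod p^{p^{r-1}+2r})`. -/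
theorem pochhammer_ratio_reflection (p : ℕ) [Fact p.Prime] (hp : 5 ≤ p)
    (a a' : ℚ) (h0 : 0 < a) (h1 : a < 1) (hunit : ‖(a : ℚ_[p])‖ = 1)
    (i : ℕ) (hi1 : 1 ≤ i) (hi2 : i ≤ p - 1)
    (hdef : (p : ℚ) * a' = a + i) (hdvd : ‖((a : ℚ_[p]) + i)‖ ≤ ((p : ℝ))⁻¹)
    (r : ℕ) (hr : 1 ≤ r) :
    ‖(ascPochhammer ℚ_[p] (p ^ r)).eval (a : ℚ_[p]) /
          (ascPochhammer ℚ_[p] (p ^ (r - 1))).eval (a' : ℚ_[p]) -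
        (ascPochhammer ℚ_[p] (p ^ r)).eval (1 - (a : ℚ_[p])) /
          (ascPochhammer ℚ_[p] (p ^ (r - 1))).eval (1 - (a' : ℚ_[p]))‖
      ≤ (p : ℝ) ^ (-((p : ℤ) ^ (r - 1) + 2 * r)) := by
  have hprime : p.Prime := Fact.out
  have hppos : 0 < p := hprime.pos
  have hp1R : (1 : ℝ) < p := by exact_mod_cast lt_of_lt_of_le (by norm_num) hp
  have hp0R : (0 : ℝ) < p := lt_trans one_pos hp1R
  have hinv0 : (0 : ℝ) ≤ (p : ℝ)⁻¹ := by positivity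
  have hinv1 : ((p : ℝ))⁻¹ < 1 := by
    rw [inv_lt_one_iff₀]; right; exact hp1R
  set M : ℕ := p ^ (r - 1) with hM
  set N : ℕ := p ^ r with hNdef
  have hr1 : r - 1 + 1 = r := Nat.succ_pred_eq_of_pos hr
  have hNM : N = p * M := by rw [hNdef, hM, ← pow_succ', hr1]
  have hMpos : 0 < M := pow_pos hppos _
  have hNpos : 0 < N := pow_pos hppos _
  have hip : i < p := lt_of_le_of_lt hi2 (Nat.sub_lt hppos one_pos)
  set α : ℚ_[p] := (a : ℚ_[p]) with hα
  set α' : ℚ_[p] := (a' : ℚ_[p]) with hα'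
  have hdefC : (p : ℚ_[p]) * α' = α + i := by
    rw [hα, hα']
    exact_mod_cast congrArg (fun x : ℚ => (x : ℚ_[p])) hdef
  set sI : Finset ℕ := (Finset.range N).filter (fun k => k % p = i) with hsI
  set sU : Finset ℕ := (Finset.range N).filter (fun k => ¬ k % p = i) with hsU
  set U : ℚ_[p] := ∏ k ∈ sU, (α + k) with hU
  set U' : ℚ_[p] := ∏ k ∈ sU, (α + k - N) with hU'
  set B : ℚ_[p] := ∏ j ∈ range M, (α' + j) with hB
  set B' : ℚ_[p] := ∏ j ∈ range M, (1 - α' + j) with hB'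
  set D : ℚ_[p] := ∏ j ∈ range M, (α' + j - M) with hD
  -- reindexing the filtered product
  have hbij : ∀ f : ℕ → ℚ_[p], ∏ k ∈ sI, f k = ∏ j ∈ range M, f (i + p * j) := by
    intro f
    refine Finset.prod_nbij' (fun k => k / p) (fun j => i + p * j) ?_ ?_ ?_ ?_ ?_
    · intro k hk
      rw [hsI, Finset.mem_filter, Finset.mem_range] at hk
      rw [Finset.mem_range]
      rw [Nat.div_lt_iff_lt_mul hppos]
      calc k < N := hk.1
        _ = M * p := by rw [hNM, mul_comm]
    · intro j hj
      rw [Finset.mem_range] at hj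
      rw [hsI, Finset.mem_filter, Finset.mem_range]
      constructor
      · calc i + p * j < p + p * j := by omega
          _ = p * (j + 1) := by ring
          _ ≤ p * M := Nat.mul_le_mul_left p hj
          _ = N := hNM.symm
      · rw [Nat.add_mul_mod_self_left, Nat.mod_eq_of_lt hip]
    · intro k hk
      rw [hsI, Finset.mem_filter] at hk
      rw [← hk.2]
      exact Nat.mod_add_div k p
    · intro j _
      show (i + p * j) / p = j
      rw [Nat.add_mul_div_left _ _ hppos, Nat.div_eq_of_lt hip, zero_add]
    · intro k hk
      rw [hsI, Finset.mem_filter] at hk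
      rw [← hk.2]
      rw [Nat.mod_add_div k p]
  have hsplit : ∀ f : ℕ → ℚ_[p],
      ∏ k ∈ range N, f k = (∏ k ∈ sI, f k) * ∏ k ∈ sU, f k := by
    intro f
    rw [hsI, hsU, Finset.prod_filter_mul_prod_filter_not]
  -- the two numerator factorizations
  have hA : ∏ k ∈ range N, (α + k) = (p : ℚ_[p]) ^ M * B * U := by
    rw [hsplit, hU]
    congr 1
    rw [hbij, hB]
    have step : ∏ j ∈ range M, (α + ((i + p * j : ℕ) : ℚ_[p]))
        = ∏ j ∈ range M, ((p : ℚ_[p]) * (α' + j)) := by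
      refine Finset.prod_congr rfl fun j _ => ?_
      push_cast
      rw [← add_assoc, ← hdefC]
      ring
    rw [step, Finset.prod_mul_distrib, Finset.prod_const, Finset.card_range]
  have hNcast : ((N : ℕ) : ℚ_[p]) = (p : ℚ_[p]) * M := by
    rw [hNM]; push_cast; ring
  have hA' : ∏ k ∈ range N, (α + k - N) = (p : ℚ_[p]) ^ M * D * U' := by
    rw [hsplit, hU']
    congr 1
    rw [hbij, hD]
    have step : ∏ j ∈ range M, (α + ((i + p * j : ℕ) : ℚ_[p]) - N)
        = ∏ j ∈ range M, ((p : ℚ_[p]) * (α' + j - M)) := by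
      refine Finset.prod_congr rfl fun j _ => ?_
      rw [hNcast]
      push_cast
      rw [← add_assoc, ← hdefC]
      ring
    rw [step, Finset.prod_mul_distrib, Finset.prod_const, Finset.card_range]
  -- reflections
  have hAb : ∏ k ∈ range N, (1 - α + k)
      = (-1 : ℚ_[p]) ^ N * ∏ k ∈ range N, (α + k - N) :=
    prod_reflect_neg α N hNpos
  have hBb : B' = (-1 : ℚ_[p]) ^ M * D := prod_reflect_neg α' M hMpos
  -- nonvanishing of denominators
  have hBne : B ≠ 0 := by
    rw [hB]
    refine Finset.prod_ne_zero_iff.mpr fun j _ => ?_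
    intro hzero
    have : ((a' + j : ℚ) : ℚ_[p]) = 0 := by push_cast; rw [hα'] at hzero; exact_mod_cast hzero
    have hq : a' + j = 0 := by exact_mod_cast this
    have h2 : a + i = (p : ℚ) * (-(j : ℚ)) := by
      rw [← hdef, show (a' : ℚ) = -(j : ℚ) by linarith]
    have hpos : (0 : ℚ) < a + i := by
      have : (1 : ℚ) ≤ i := by exact_mod_cast hi1
      linarith
    have hneg : (p : ℚ) * (-(j : ℚ)) ≤ 0 := by
      have : (0:ℚ) ≤ (p : ℚ) * j := by positivity
      linarith
    linarith [h2 ▸ hpos]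
  have hB'ne : B' ≠ 0 := by
    rw [hB']
    refine Finset.prod_ne_zero_iff.mpr fun j _ => ?_
    intro hzero
    have : ((1 - a' + j : ℚ) : ℚ_[p]) = 0 := by push_cast; rw [hα'] at hzero; exact_mod_cast hzero
    have hq : (1 : ℚ) - a' + j = 0 := by exact_mod_cast this
    have h2 : a + i = (p : ℚ) * (1 + j) := by
      rw [← hdef, show (a' : ℚ) = 1 + (j : ℚ) by linarith]
    have hiq : (i : ℚ) ≤ (p : ℚ) - 1 := by
      have : ((i : ℕ) : ℚ) ≤ ((p - 1 : ℕ) : ℚ) := by exact_mod_cast hi2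
      rwa [Nat.cast_sub (le_of_lt hprime.one_lt), Nat.cast_one] at this
    have hjq : (p : ℚ) ≤ (p : ℚ) * (1 + j) := by
      have h0j : (0:ℚ) ≤ (j:ℚ) := by positivity
      nlinarith [show (0:ℚ) < (p:ℚ) by exact_mod_cast hppos]
    linarith
  have hDne : D ≠ 0 := by
    intro h
    exact hB'ne (by rw [hBb, h, mul_zero])
  -- parity
  have hNodd : Odd N := (hprime.odd_of_ne_two (by omega)).pow
  have hModd : Odd M := (hprime.odd_of_ne_two (by omega)).pow
  -- the two ratios
  have hratio1 : (∏ k ∈ range N, (α + k)) / B = (p : ℚ_[p]) ^ M * U := by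
    rw [hA, div_eq_iff hBne]; ring
  have hratio2 : (∏ k ∈ range N, (1 - α + k)) / B' = (p : ℚ_[p]) ^ M * U' := by
    rw [hAb, hA', div_eq_iff hB'ne, hBb, hNodd.neg_one_pow, hModd.neg_one_pow]
    ring
  -- norms of the unit factors
  have hxnorm : ∀ k ∈ sU, ‖α + k‖ = 1 := by
    intro k hk
    rw [hsU, Finset.mem_filter] at hk
    have hki : ¬ ((p : ℤ) ∣ (k : ℤ) - (i : ℤ)) := by
      intro hdvd'
      apply hk.2
      have h2 : (i : ℤ) % p = (k : ℤ) % p := Int.modEq_iff_dvd.mpr hdvd'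
      rw [← Int.natCast_mod, ← Int.natCast_mod] at h2
      have h3 : i % p = k % p := by exact_mod_cast h2
      rw [Nat.mod_eq_of_lt hip] at h3
      exact h3.symm
    set d : ℤ := (k : ℤ) - (i : ℤ) with hddef
    have hnorm1 : ‖((d : ℤ) : ℚ_[p])‖ = 1 := by
      have hle : ‖((d : ℤ) : ℚ_[p])‖ ≤ 1 := Padic.norm_int_le_one d
      have hnlt : ¬ ‖((d : ℤ) : ℚ_[p])‖ < 1 := fun h =>
        hki ((Padic.norm_intCast_lt_one_iff (k := d)).mp h)
      exact le_antisymm hle (not_lt.mp hnlt)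
    have hlt : ‖α + i‖ < ‖((d : ℤ) : ℚ_[p])‖ := by
      rw [hnorm1]; exact lt_of_le_of_lt hdvd hinv1
    have hsum : α + k = ((d : ℤ) : ℚ_[p]) + (α + i) := by rw [hddef]; push_cast; ring
    rw [hsum, Padic.add_eq_max_of_ne (ne_of_gt hlt), max_eq_left (le_of_lt hlt), hnorm1]
  have hxne : ∀ k ∈ sU, (α + (k : ℚ_[p])) ≠ 0 := by
    intro k hk h
    have := hxnorm k hk
    rw [h, norm_zero] at this
    norm_num at this
  -- approximation of α by a natural number
  set z : ℤ_[p] := ⟨α, le_of_eq hunit⟩ with hz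
  set c : ℕ := z.appr r with hc
  have hcN : c < N := by rw [hNdef]; exact PadicInt.appr_lt z r
  have hcnorm : ‖α - c‖ ≤ ((p : ℝ)⁻¹) ^ r := by
    have hspec := PadicInt.appr_spec r z
    rw [Ideal.mem_span_singleton] at hspec
    obtain ⟨t, ht⟩ := hspec
    have hQ : α - c = ((p : ℚ_[p])) ^ r * ((t : ℤ_[p]) : ℚ_[p]) := by
      have h2 := congrArg (fun w : ℤ_[p] => (w : ℚ_[p])) ht
      push_cast at h2
      exact h2
    rw [hQ, norm_mul, norm_pow, Padic.norm_p]
    calc ((p:ℝ)⁻¹) ^ r * ‖((t : ℤ_[p]) : ℚ_[p])‖ ≤ ((p:ℝ)⁻¹) ^ r * 1 := by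
          refine mul_le_mul_of_nonneg_left ?_ (by positivity)
          rw [PadicInt.padic_norm_e_of_padicInt]
          exact PadicInt.norm_le_one t
      _ = _ := mul_one _
  have hpowlt : ((p:ℝ)⁻¹) ^ r < 1 := pow_lt_one₀ hinv0 hinv1 (by omega)
  have hpc : p ∣ (c + i) := by
    have hnorm : ‖(((c + i : ℕ) : ℤ) : ℚ_[p])‖ < 1 := by
      have heq : (((c + i : ℕ) : ℤ) : ℚ_[p]) = (((c : ℚ_[p]) - α) + (α + i)) := by
        push_cast; ring
      rw [heq]
      refine lt_of_le_of_lt (Padic.nonarchimedean _ _) (max_lt ?_ ?_)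
      · rw [show (c : ℚ_[p]) - α = -(α - c) by ring, norm_neg]
        exact lt_of_le_of_lt hcnorm hpowlt
      · exact lt_of_le_of_lt hdvd hinv1
    have := (Padic.norm_intCast_lt_one_iff).mp hnorm
    exact_mod_cast this
  -- the involution
  set σ : ℕ → ℕ := fun k => (4 * N - 2 * c - k) % N with hσ
  have hσlt : ∀ k, σ k < N := fun k => Nat.mod_lt _ hNpos
  have hσdvd : ∀ k, k < N → N ∣ σ k + (2 * c + k) := by
    intro k hkN
    have h6 : (4 * N - 2 * c - k) + (2 * c + k) = 4 * N := by omega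
    have h5 : σ k + (2 * c + k) ≡ (4 * N - 2 * c - k) + (2 * c + k) [MOD N] :=
      (Nat.mod_modEq _ N).add_right _
    rw [h6] at h5
    have h7 : 4 * N ≡ 0 [MOD N] := Nat.modEq_zero_iff_dvd.mpr ⟨4, by ring⟩
    exact Nat.modEq_zero_iff_dvd.mp (h5.trans h7)
  have hkNmem : ∀ k ∈ sU, k < N := by
    intro k hk
    rw [hsU, Finset.mem_filter, Finset.mem_range] at hk
    exact hk.1
  have hσmem : ∀ k ∈ sU, σ k ∈ sU := by
    intro k hk
    have hkN := hkNmem k hk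
    rw [hsU, Finset.mem_filter, Finset.mem_range] at hk ⊢
    refine ⟨hσlt k, fun hσi => ?_⟩
    apply hk.2
    have hd1 : p ∣ σ k + (2 * c + k) := dvd_trans ⟨M, hNM⟩ (hσdvd k hkN)
    have hA1 : ((σ k + (2 * c + k) : ℕ) : ZMod p) = 0 :=
      (ZMod.natCast_eq_zero_iff _ _).mpr hd1
    have hB1 : ((c + i : ℕ) : ZMod p) = 0 := (ZMod.natCast_eq_zero_iff _ _).mpr hpc
    have hC1 : ((σ k : ℕ) : ZMod p) = ((i : ℕ) : ZMod p) := by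
      rw [ZMod.natCast_eq_natCast_iff']
      rw [hσi, Nat.mod_eq_of_lt hip]
    have hk' : ((k : ℕ) : ZMod p) = ((i : ℕ) : ZMod p) := by
      push_cast at hA1 hB1 hC1 ⊢
      linear_combination hA1 - 2 * hB1 - hC1
    have h5 := (ZMod.natCast_eq_natCast_iff' _ _ _).mp hk'
    rwa [Nat.mod_eq_of_lt hip] at h5
  have hσσ : ∀ k, k < N → σ (σ k) = k := by
    intro k hkN
    have d1 := hσdvd (σ k) (hσlt k)
    have d2 := hσdvd k hkN
    have h1 : σ (σ k) + (2 * c + σ k) ≡ 0 [MOD N] := Nat.modEq_zero_iff_dvd.mpr d1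
    have h2 : k + (2 * c + σ k) ≡ 0 [MOD N] := by
      rw [show k + (2 * c + σ k) = σ k + (2 * c + k) by ring]
      exact Nat.modEq_zero_iff_dvd.mpr d2
    have h3 : σ (σ k) ≡ k [MOD N] := Nat.ModEq.add_right_cancel' _ (h1.trans h2.symm)
    have h4 : σ (σ k) % N = k % N := h3
    rwa [Nat.mod_eq_of_lt (hσlt _), Nat.mod_eq_of_lt hkN] at h4
  have hNn : ‖((N : ℕ) : ℚ_[p])‖ = ((p:ℝ)⁻¹) ^ r := by
    have hcast : ((N : ℕ) : ℚ_[p]) = (p : ℚ_[p]) ^ r := by rw [hNdef]; push_cast; ring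
    rw [hcast, norm_pow, Padic.norm_p]
  -- the pair bound
  have hpair : ∀ k ∈ sU, ‖(α + k)⁻¹ + (α + (σ k : ℕ))⁻¹‖ ≤ ((p:ℝ)⁻¹) ^ r := by
    intro k hk
    have hmem' := hσmem k hk
    have hu := hxnorm k hk
    have hv := hxnorm _ hmem'
    have hune := hxne k hk
    have hvne := hxne _ hmem'
    have hkN := hkNmem k hk
    have hiden : (α + k)⁻¹ + (α + (σ k : ℕ))⁻¹
        = ((α + k) + (α + (σ k : ℕ))) * ((α + k)⁻¹ * (α + (σ k : ℕ))⁻¹) := by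
      field_simp
      ring
    rw [hiden, norm_mul, norm_mul, norm_inv, norm_inv, hu, hv]
    simp only [inv_one, mul_one]
    obtain ⟨t, ht⟩ := hσdvd k hkN
    have hsum : (α + k) + (α + (σ k : ℕ)) = 2 * (α - c) + ((N * t : ℕ) : ℚ_[p]) := by
      have h9 : ((N * t : ℕ) : ℚ_[p]) = ((σ k + (2 * c + k) : ℕ) : ℚ_[p]) := by rw [← ht]
      rw [h9]; push_cast; ring
    rw [hsum]
    refine le_trans (Padic.nonarchimedean _ _) (max_le ?_ ?_)
    · rw [norm_mul]
      have h2le : ‖(2 : ℚ_[p])‖ ≤ 1 := by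
        have h8 : ((2:ℤ) : ℚ_[p]) = (2 : ℚ_[p]) := by push_cast; ring
        rw [← h8]; exact Padic.norm_int_le_one _
      calc ‖(2:ℚ_[p])‖ * ‖α - c‖ ≤ 1 * (((p:ℝ)⁻¹) ^ r) :=
            mul_le_mul h2le hcnorm (norm_nonneg _) zero_le_one
        _ = _ := one_mul _
    · have h9 : ((N * t : ℕ) : ℚ_[p]) = ((N : ℕ) : ℚ_[p]) * ((t : ℕ) : ℚ_[p]) := by push_cast; ring
      rw [h9, norm_mul, hNn]
      have htle : ‖((t : ℕ) : ℚ_[p])‖ ≤ 1 := by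
        have h8 : ((t : ℕ) : ℚ_[p]) = (((t : ℕ) : ℤ) : ℚ_[p]) := by push_cast; ring
        rw [h8]; exact Padic.norm_int_le_one _
      calc ((p:ℝ)⁻¹) ^ r * ‖((t : ℕ) : ℚ_[p])‖ ≤ ((p:ℝ)⁻¹) ^ r * 1 :=
            mul_le_mul_of_nonneg_left htle (by positivity)
        _ = _ := mul_one _
  -- the sum of inverses
  set T : ℚ_[p] := ∑ k ∈ sU, (α + k)⁻¹ with hT
  have hTb : ‖T‖ ≤ ((p:ℝ)⁻¹) ^ r := by
    have hswap : ∑ k ∈ sU, (α + (σ k : ℕ))⁻¹ = ∑ k ∈ sU, (α + k)⁻¹ :=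
      Finset.sum_nbij' σ σ hσmem hσmem (fun k hk => hσσ k (hkNmem k hk))
        (fun k hk => hσσ k (hkNmem k hk)) (fun k _ => rfl)
    have h2T : (2 : ℚ_[p]) * T = ∑ k ∈ sU, ((α + k)⁻¹ + (α + (σ k : ℕ))⁻¹) := by
      rw [Finset.sum_add_distrib, hswap, hT, two_mul]
    have h2norm : ‖(2 : ℚ_[p])‖ = 1 := by
      have h8 : ((2:ℤ) : ℚ_[p]) = (2 : ℚ_[p]) := by push_cast; ring
      rw [← h8]
      refine le_antisymm (Padic.norm_int_le_one _) (le_of_not_gt fun h => ?_)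
      have h5 := (Padic.norm_intCast_lt_one_iff).mp h
      have h6 := Int.le_of_dvd (by norm_num) h5
      have : p ≤ 2 := by exact_mod_cast h6
      omega
    calc ‖T‖ = ‖(2:ℚ_[p])‖ * ‖T‖ := by rw [h2norm, one_mul]
      _ = ‖(2:ℚ_[p]) * T‖ := (norm_mul _ _).symm
      _ ≤ _ := by
          rw [h2T]
          exact IsUltrametricDist.norm_sum_le_of_forall_le_of_nonneg (by positivity) hpair
  -- the first-order coefficient
  have hUle : ‖U‖ ≤ 1 := by
    rw [hU, norm_prod]
    exact Finset.prod_le_one (fun k _ => norm_nonneg _) (fun k hk => le_of_eq (hxnorm k hk))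
  have hSeq : ∑ k ∈ sU, ∏ l ∈ sU.erase k, (α + l) = T * U := by
    rw [hT, Finset.sum_mul]
    refine Finset.sum_congr rfl fun k hk => ?_
    rw [hU, ← Finset.mul_prod_erase sU _ hk, ← mul_assoc, inv_mul_cancel₀ (hxne k hk), one_mul]
  have hE := prod_sub_bound sU (fun k => α + (k : ℚ_[p])) ((N : ℕ) : ℚ_[p])
    (by rw [hNn]; exact le_of_lt hpowlt) (fun k hk => le_of_eq (hxnorm k hk))
  rw [hSeq] at hE
  have hNS : ‖((N : ℕ) : ℚ_[p]) * (T * U)‖ ≤ ((p:ℝ)⁻¹) ^ (2 * r) := by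
    rw [norm_mul, norm_mul, hNn, two_mul, pow_add]
    refine mul_le_mul_of_nonneg_left ?_ (by positivity)
    calc ‖T‖ * ‖U‖ ≤ ((p:ℝ)⁻¹) ^ r * 1 :=
          mul_le_mul hTb hUle (norm_nonneg _) (by positivity)
      _ = _ := mul_one _
  have hsq : ‖((N : ℕ) : ℚ_[p])‖ ^ 2 = ((p:ℝ)⁻¹) ^ (2 * r) := by
    rw [hNn, ← pow_mul, mul_comm r 2]
  have hUU : ‖U - U'‖ ≤ ((p:ℝ)⁻¹) ^ (2 * r) := by
    have hid : U - U' = ((N : ℕ) : ℚ_[p]) * (T * U)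
        + -(U' - U + ((N : ℕ) : ℚ_[p]) * (T * U)) := by ring
    rw [hid]
    refine le_trans (Padic.nonarchimedean _ _) (max_le hNS ?_)
    rw [norm_neg]
    calc ‖U' - U + ((N : ℕ) : ℚ_[p]) * (T * U)‖ ≤ ‖((N : ℕ) : ℚ_[p])‖ ^ 2 := hE
      _ = _ := hsq
  -- final assembly
  rw [asc_eval_prod, asc_eval_prod, asc_eval_prod, asc_eval_prod]
  rw [hratio1, hratio2, ← mul_sub, norm_mul, norm_pow, Padic.norm_p]
  have hfin : ((p:ℝ)⁻¹) ^ M * ((p:ℝ)⁻¹) ^ (2 * r) = (p : ℝ) ^ (-((p : ℤ) ^ (r - 1) + 2 * r)) := by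
    rw [← pow_add]
    have hexp : -((p : ℤ) ^ (r - 1) + 2 * r) = -(((M + 2 * r : ℕ) : ℤ)) := by
      rw [hM]; push_cast; ring
    rw [hexp, zpow_neg, zpow_natCast, inv_pow]
  calc ((p:ℝ)⁻¹) ^ M * ‖U - U'‖ ≤ ((p:ℝ)⁻¹) ^ M * (((p:ℝ)⁻¹) ^ (2 * r)) :=
        mul_le_mul_of_nonneg_left hUU (by positivity)
    _ = _ := hfin
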